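/- Volterra approximation theorem (Boyd–Chua, as stated in the paper): let M₁, M₂ > 0, let K_{M₁,M₂} := { u ∈ C(ℝ, ℝ) bounded : ‖u‖_∞ ≤ M₁ and ‖u(·−τ) − u‖_∞ ≤ M₂ τ for all τ ≥ 0 }, and let ε > 0. Let R be any operator mapping K_{M₁,M₂} to functions ℝ → ℝ that is time-invariant (R(u(·−τ))(t) = (Ru)(t−τ) for all u ∈ K_{M₁,M₂}, τ, t ∈ ℝ) and has fading memory on K_{M₁,M₂}. Then there exists a finite Volterra series operator N̂ such that for all u ∈ K_{M₁,M₂}: sup_{t∈ℝ} |R u(t) − N̂ u(t)| < ε. -/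

import Mathlib

open MeasureTheory

/-- Membership in the class K_{M₁,M₂}: bounded continuous functions u with ‖u‖_∞ ≤ M₁ and
‖u(·−τ) − u‖_∞ ≤ M₂ τ for all τ ≥ 0. -/
def MemK (M₁ M₂ : ℝ) (u : ℝ → ℝ) : Prop :=
  Continuous u ∧ (∀ t, |u t| ≤ M₁) ∧ ∀ τ ≥ (0:ℝ), ∀ t, |u (t - τ) - u t| ≤ M₂ * τ

/-- sup_{t ≤ 0} |u(t) − v(t)| w(t). -/
noncomputable def fadeSup (u v w : ℝ → ℝ) : ℝ :=
  sSup ((fun t => |u t - v t| * w t) '' Set.Iic 0)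

/-- An operator N has fading memory on a set K of signals if there is an increasing weight
function w : (−∞,0] → (0,1] with limit 0 at −∞ such that for each u ∈ K and ε > 0 there is
δ > 0 with: for all v ∈ K, sup_{t≤0} |u(t)−v(t)| w(t) < δ implies |Nu(0) − Nv(0)| < ε. -/
def FadingMemoryOn (N : (ℝ → ℝ) → ℝ → ℝ) (K : Set (ℝ → ℝ)) : Prop :=
  ∃ w : ℝ → ℝ,
    (∀ t ≤ (0:ℝ), 0 < w t ∧ w t ≤ 1) ∧
    (∀ s t : ℝ, s ≤ t → t ≤ 0 → w s ≤ w t) ∧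
    Filter.Tendsto w Filter.atBot (nhds 0) ∧
    ∀ u ∈ K, ∀ ε > (0:ℝ), ∃ δ > (0:ℝ), ∀ v ∈ K,
      fadeSup u v w < δ → |N u 0 - N v 0| < ε

/-- The data of a finite Volterra series operator: an order N, a constant term h₀, and
integrable kernels h_n ∈ L¹(ℝⁿ) for 1 ≤ n ≤ N. -/
structure VolterraSeries where
  order : ℕ
  h0 : ℝ
  h : (n : ℕ) → (Fin n → ℝ) → ℝ
  integrable : ∀ n, 1 ≤ n → n ≤ order → MeasureTheory.Integrable (h n)

/-- Application of a finite Volterra series operator: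
(N̂u)(t) = h₀ + Σ_{n=1}^{N} ∫_{ℝⁿ} h_n(τ₁,…,τ_n) u(t−τ₁)⋯u(t−τ_n) dτ. -/
noncomputable def VolterraSeries.apply (V : VolterraSeries) (x : ℝ → ℝ) (t : ℝ) : ℝ :=
  V.h0 + ∑ n ∈ Finset.Icc 1 V.order, ∫ τ : Fin n → ℝ, V.h n τ * ∏ j, x (t - τ j)


section BoydChuaProof

lemma lips_of {M₂ : ℝ} {u : ℝ → ℝ} (h : ∀ τ ≥ (0:ℝ), ∀ t, |u (t - τ) - u t| ≤ M₂ * τ)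
    (a b : ℝ) : |u a - u b| ≤ M₂ * |a - b| := by
  rcases le_total a b with hab | hab
  · have := h (b - a) (by linarith) b
    rw [abs_of_nonpos (by linarith : a - b ≤ 0)]
    calc |u a - u b| = |u (b - (b - a)) - u b| := by ring_nf
      _ ≤ M₂ * (b - a) := this
      _ = M₂ * -(a - b) := by ring
  · have := h (a - b) (by linarith) a
    rw [abs_of_nonneg (by linarith : (0:ℝ) ≤ a - b)]
    calc |u a - u b| = |u (a - (a - b)) - u a| := by rw [abs_sub_comm]; ring_nf
      _ ≤ M₂ * (a - b) := this

lemma cont_of_lips {M₂ : ℝ} (hM₂ : 0 ≤ M₂) {u : ℝ → ℝ}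
    (h : ∀ τ ≥ (0:ℝ), ∀ t, |u (t - τ) - u t| ≤ M₂ * τ) : Continuous u := by
  refine LipschitzWith.continuous (K := Real.toNNReal M₂) ?_
  refine LipschitzWith.of_dist_le_mul fun a b => ?_
  simpa [Real.dist_eq, Real.coe_toNNReal M₂ hM₂] using lips_of h a b

lemma isCompact_K {M₁ M₂ : ℝ} (hM₂ : 0 ≤ M₂) : IsCompact {u : ℝ → ℝ | MemK M₁ M₂ u} := by
  have hsub : {u : ℝ → ℝ | MemK M₁ M₂ u} ⊆ Set.pi Set.univ (fun _ : ℝ => Set.Icc (-M₁) M₁) := by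
    intro u hu t _
    exact abs_le.1 (hu.2.1 t)
  refine IsCompact.of_isClosed_subset (isCompact_univ_pi fun _ => isCompact_Icc) ?_ hsub
  have : {u : ℝ → ℝ | MemK M₁ M₂ u} =
      (⋂ t : ℝ, {u : ℝ → ℝ | |u t| ≤ M₁}) ∩
      (⋂ (τ : ℝ) (_ : 0 ≤ τ) (t : ℝ), {u : ℝ → ℝ | |u (t - τ) - u t| ≤ M₂ * τ}) := by
    ext u
    constructor
    · rintro ⟨hc, hb, hl⟩
      refine ⟨Set.mem_iInter.2 hb, ?_⟩
      simp only [Set.mem_iInter]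
      exact fun τ hτ t => hl τ hτ t
    · rintro ⟨hb, hl⟩
      simp only [Set.mem_iInter] at hb hl
      exact ⟨cont_of_lips hM₂ hl, hb, hl⟩
  rw [this]
  refine IsClosed.inter (isClosed_iInter fun t => ?_) ?_
  · exact isClosed_le ((continuous_apply t).abs) continuous_const
  · refine isClosed_iInter fun τ => isClosed_iInter fun hτ => isClosed_iInter fun t => ?_
    exact isClosed_le (((continuous_apply (t - τ)).sub (continuous_apply t)).abs) continuous_const

/-- Continuity criterion: a functional which is uniformly continuous w.r.t. sup norm on
compact time windows is continuous on K in the product topology. -/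
lemma continuous_of_window {M₁ M₂ : ℝ} (hM₂ : 0 < M₂) (Φ : (ℝ → ℝ) → ℝ)
    (hyp : ∀ u, MemK M₁ M₂ u → ∀ ε > (0:ℝ), ∃ δ > (0:ℝ), ∃ T ≥ (0:ℝ),
      ∀ v, MemK M₁ M₂ v → (∀ s ∈ Set.Icc (-T) T, |u s - v s| ≤ δ) → |Φ u - Φ v| < ε) :
    Continuous (fun x : {u : ℝ → ℝ // MemK M₁ M₂ u} => Φ x.val) := by
  rw [continuous_iff_continuousAt]
  intro x
  rw [ContinuousAt, Metric.tendsto_nhds]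
  intro ε hε
  obtain ⟨δ, hδ, T, hT, hloc⟩ := hyp x.val x.prop ε hε
  set h₀ : ℝ := δ / (4 * M₂) with hh₀
  have hh₀pos : 0 < h₀ := by positivity
  set n : ℕ := ⌈2 * T / h₀⌉₊ with hn
  -- grid points
  set p : Fin (n + 1) → ℝ := fun k => -T + (k : ℕ) * h₀ with hp
  -- the neighborhood
  have hopen : IsOpen {v : ℝ → ℝ | ∀ k : Fin (n + 1), |x.val (p k) - v (p k)| < δ / 2} := by
    have : {v : ℝ → ℝ | ∀ k : Fin (n + 1), |x.val (p k) - v (p k)| < δ / 2} =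
        ⋂ k : Fin (n + 1), {v : ℝ → ℝ | |x.val (p k) - v (p k)| < δ / 2} := by
      ext v; simp [Set.mem_iInter]
    rw [this]
    refine isOpen_iInter_of_finite fun k => ?_
    exact isOpen_lt ((continuous_const.sub (continuous_apply (p k))).abs) continuous_const
  have hmem : x ∈ Subtype.val ⁻¹' {v : ℝ → ℝ | ∀ k : Fin (n + 1), |x.val (p k) - v (p k)| < δ / 2} := by
    intro k; simpa using half_pos hδ
  refine Filter.eventually_of_mem (IsOpen.mem_nhds (hopen.preimage continuous_subtype_val) hmem) ?_
  intro y hy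
  rw [Real.dist_eq, abs_sub_comm]
  refine hloc y.val y.prop fun s hs => ?_
  -- nearest grid point
  obtain ⟨hs1, hs2⟩ := hs
  have hsT : 0 ≤ s + T := by linarith
  set k₀ : ℕ := ⌊(s + T) / h₀⌋₊ with hk₀
  have hk₀le : k₀ ≤ n := by
    have h1 : (s + T) / h₀ ≤ 2 * T / h₀ := by
      exact (div_le_div_iff_of_pos_right hh₀pos).mpr (by linarith)
    have h2 : (2 * T / h₀ : ℝ) ≤ (n : ℝ) := Nat.le_ceil _
    have : ((k₀ : ℕ) : ℝ) ≤ (n : ℝ) := le_trans (le_trans (Nat.floor_le (by positivity)) h1) h2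
    exact_mod_cast this
  set q : ℝ := p ⟨k₀, Nat.lt_succ_of_le hk₀le⟩ with hq
  have hq1 : q ≤ s := by
    have : (k₀ : ℝ) * h₀ ≤ s + T := by
      have := Nat.floor_le (div_nonneg hsT hh₀pos.le)
      calc (k₀ : ℝ) * h₀ ≤ ((s + T) / h₀) * h₀ := by
            apply mul_le_mul_of_nonneg_right this hh₀pos.le
        _ = s + T := by field_simp
    simp only [hq, hp]
    linarith
  have hq2 : s - q ≤ h₀ := by
    have hlt : s + T < ((k₀ : ℝ) + 1) * h₀ := by
      have := Nat.lt_floor_add_one ((s + T) / h₀)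
      calc s + T = ((s + T) / h₀) * h₀ := by field_simp
        _ < ((k₀ : ℝ) + 1) * h₀ := by
            apply mul_lt_mul_of_pos_right ?_ hh₀pos
            exact_mod_cast this
    simp only [hq, hp]
    push_cast
    nlinarith
  have hxl := lips_of x.prop.2.2
  have hyl := lips_of y.prop.2.2
  have hgrid := hy ⟨k₀, Nat.lt_succ_of_le hk₀le⟩
  have e1 : |x.val s - x.val q| ≤ M₂ * |s - q| := hxl s q
  have e2 : |y.val s - y.val q| ≤ M₂ * |s - q| := hyl s q
  have habs : |s - q| ≤ h₀ := by rw [abs_of_nonneg (by linarith)]; exact hq2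
  have hM2h : M₂ * |s - q| ≤ δ / 4 := by
    calc M₂ * |s - q| ≤ M₂ * h₀ := by nlinarith
      _ = δ / 4 := by rw [hh₀]; field_simp
  calc |x.val s - y.val s|
      ≤ |x.val s - x.val q| + |x.val q - y.val q| + |y.val q - y.val s| := by
        have := abs_sub_le (x.val s) (x.val q) (y.val s)
        have := abs_sub_le (x.val q) (y.val q) (y.val s)
        linarith [abs_sub_le (x.val s) (x.val q) (y.val s),
          abs_sub_le (x.val q) (y.val q) (y.val s)]
    _ ≤ δ / 4 + δ / 2 + δ / 4 := by
        refine add_le_add (add_le_add (le_trans e1 hM2h) (le_of_lt hgrid)) ?_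
        rw [abs_sub_comm]
        exact le_trans e2 hM2h
    _ = δ := by ring

/-- The window-continuity hypothesis for `R · 0` follows from fading memory. -/
lemma window_of_fadingMemory {M₁ M₂ : ℝ} (hM₁ : 0 < M₁) (R : (ℝ → ℝ) → ℝ → ℝ)
    (hFM : FadingMemoryOn R {u | MemK M₁ M₂ u}) :
    ∀ u, MemK M₁ M₂ u → ∀ ε > (0:ℝ), ∃ δ > (0:ℝ), ∃ T ≥ (0:ℝ),
      ∀ v, MemK M₁ M₂ v → (∀ s ∈ Set.Icc (-T) T, |u s - v s| ≤ δ) → |R u 0 - R v 0| < ε := by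
  obtain ⟨w, hw1, hwmono, hwlim, hwcont⟩ := hFM
  intro u hu ε hε
  obtain ⟨δ₀, hδ₀, hδ₀p⟩ := hwcont u hu ε hε
  set c : ℝ := δ₀ / (2 * (2 * M₁ + 1)) with hc
  have hcpos : 0 < c := by positivity
  -- find T₀ with w t < c for t ≤ T₀
  have : ∀ᶠ t in Filter.atBot, |w t - 0| < c := by
    have := Metric.tendsto_nhds.1 hwlim c hcpos
    simpa [Real.dist_eq] using this
  obtain ⟨T₀, hT₀⟩ := Filter.eventually_atBot.1 this
  refine ⟨c, hcpos, max 1 (-T₀), le_trans zero_le_one (le_max_left _ _), fun v hv hclose => ?_⟩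
  set T := max 1 (-T₀) with hT
  apply hδ₀p v hv
  have hTpos : (0:ℝ) < T := lt_of_lt_of_le zero_lt_one (le_max_left _ _)
  have hbound : ∀ y ∈ (fun t => |u t - v t| * w t) '' Set.Iic 0, y ≤ δ₀ / 2 := by
    rintro y ⟨t, ht, rfl⟩
    simp only [Set.mem_Iic] at ht
    obtain ⟨hwt0, hwt1⟩ := hw1 t ht
    rcases le_or_gt (-T) t with h | h
    · have h1 : |u t - v t| ≤ c := hclose t ⟨h, le_trans ht hTpos.le⟩
      calc |u t - v t| * w t ≤ c * 1 := by
            apply mul_le_mul h1 hwt1 hwt0.le hcpos.le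
        _ = c := mul_one c
        _ ≤ δ₀ / 2 := by
            rw [hc]
            rw [div_le_div_iff₀ (by positivity) (by norm_num)]
            nlinarith
    · have h1 : |u t - v t| ≤ 2 * M₁ := by
        have := hu.2.1 t; have := hv.2.1 t
        calc |u t - v t| ≤ |u t| + |v t| := abs_sub _ _
          _ ≤ 2 * M₁ := by linarith
      have h2 : w t ≤ w (-T) := hwmono t (-T) h.le (by linarith)
      have h3 : w (-T) < c := by
        have hTT : -T ≤ T₀ := by
          have : -T₀ ≤ T := le_max_right 1 (-T₀)
          linarith
        have := hT₀ (-T) hTT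
        rw [sub_zero, abs_of_nonneg (hw1 (-T) (by linarith)).1.le] at this
        exact this
      calc |u t - v t| * w t ≤ (2 * M₁) * w t := by
            apply mul_le_mul_of_nonneg_right h1 hwt0.le
        _ ≤ (2 * M₁) * c := by nlinarith
        _ ≤ δ₀ / 2 := by
            have e : 2 * M₁ * (δ₀ / (2 * (2 * M₁ + 1))) = δ₀ * (2 * M₁ / (2 * (2 * M₁ + 1))) := by
              ring
            have e2 : 2 * M₁ / (2 * (2 * M₁ + 1)) ≤ 1 / 2 := by
              rw [div_le_div_iff₀ (by positivity) (by norm_num)]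
              nlinarith
            calc 2 * M₁ * (δ₀ / (2 * (2 * M₁ + 1))) = δ₀ * (2 * M₁ / (2 * (2 * M₁ + 1))) := e
              _ ≤ δ₀ * (1 / 2) := by nlinarith
              _ = δ₀ / 2 := by ring
  have : fadeSup u v w ≤ δ₀ / 2 := Real.sSup_le hbound (by positivity)
  linarith

/-- The linear window functional. -/
noncomputable def Lfun (a b : ℝ) (u : ℝ → ℝ) : ℝ := ∫ τ in Set.Icc a b, u (-τ)

lemma Lfun_window {M₁ M₂ : ℝ} (a b : ℝ) :
    ∀ u, MemK M₁ M₂ u → ∀ ε > (0:ℝ), ∃ δ > (0:ℝ), ∃ T ≥ (0:ℝ),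
      ∀ v, MemK M₁ M₂ v → (∀ s ∈ Set.Icc (-T) T, |u s - v s| ≤ δ) →
        |Lfun a b u - Lfun a b v| < ε := by
  intro u hu ε hε
  set C : ℝ := (volume (Set.Icc a b)).toReal with hC
  have hC0 : 0 ≤ C := ENNReal.toReal_nonneg
  refine ⟨ε / (2 * (C + 1)), by positivity, max |a| |b|, le_trans (abs_nonneg a) (le_max_left _ _),
    fun v hv hclose => ?_⟩
  set δ := ε / (2 * (C + 1)) with hδ
  have hint_u : IntegrableOn (fun τ => u (-τ)) (Set.Icc a b) :=
    (hu.1.comp continuous_neg).integrableOn_Icc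
  have hint_v : IntegrableOn (fun τ => v (-τ)) (Set.Icc a b) :=
    (hv.1.comp continuous_neg).integrableOn_Icc
  have hdiff : Lfun a b u - Lfun a b v = ∫ τ in Set.Icc a b, (u (-τ) - v (-τ)) :=
    (integral_sub hint_u hint_v).symm
  rw [hdiff]
  have hbd : ∀ τ ∈ Set.Icc a b, ‖u (-τ) - v (-τ)‖ ≤ δ := by
    intro τ hτ
    apply hclose
    constructor
    · have : |τ| ≤ max |a| |b| := by
        rcases hτ with ⟨h1, h2⟩
        rw [abs_le]
        exact ⟨by linarith [le_max_left |a| |b|, neg_abs_le a],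
          by linarith [le_max_right |a| |b|, le_abs_self b]⟩
      have h' := abs_le.1 this
      linarith [h'.1]
    · have : |τ| ≤ max |a| |b| := by
        rcases hτ with ⟨h1, h2⟩
        rw [abs_le]
        exact ⟨by linarith [le_max_left |a| |b|, neg_abs_le a],
          by linarith [le_max_right |a| |b|, le_abs_self b]⟩
      have h' := abs_le.1 this
      have : (-τ : ℝ) ≤ |τ| := neg_le_abs τ
      linarith [h'.2]
  have := norm_setIntegral_le_of_norm_le_const (μ := volume) (s := Set.Icc a b)
    measure_Icc_lt_top hbd
  have h2 : ‖∫ τ in Set.Icc a b, (u (-τ) - v (-τ))‖ ≤ δ * C := by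
    calc ‖∫ τ in Set.Icc a b, (u (-τ) - v (-τ))‖ ≤ δ * (volume (Set.Icc a b)).toReal := this
      _ = δ * C := rfl
  have h3 : |∫ τ in Set.Icc a b, (u (-τ) - v (-τ))| ≤ δ * C := by
    rwa [Real.norm_eq_abs] at h2
  have : δ * C < ε := by
    rw [hδ]
    rw [div_mul_eq_mul_div, div_lt_iff₀ (by positivity)]
    nlinarith
  linarith

/-- Volterra representability of a continuous functional on K. -/
def VRep (M₁ M₂ : ℝ) (f : C({u : ℝ → ℝ // MemK M₁ M₂ u}, ℝ)) : Prop :=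
  ∃ (N : ℕ) (c : ℝ) (h : (n : ℕ) → (Fin n → ℝ) → ℝ),
    (∀ n, Integrable (h n)) ∧ (∀ n, N < n → h n = 0) ∧
    ∀ x : {u : ℝ → ℝ // MemK M₁ M₂ u},
      f x = c + ∑ n ∈ Finset.Icc 1 N, ∫ τ : Fin n → ℝ, h n τ * ∏ j, x.val (-(τ j))

lemma prod_bdd {M₁ M₂ : ℝ} {u : ℝ → ℝ} (hu : MemK M₁ M₂ u) {n : ℕ} (τ : Fin n → ℝ) :
    ‖∏ j : Fin n, u (-(τ j))‖ ≤ M₁ ^ n := by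
  rw [Real.norm_eq_abs, Finset.abs_prod]
  calc ∏ j : Fin n, |u (-(τ j))| ≤ ∏ _j : Fin n, M₁ :=
        Finset.prod_le_prod (fun j _ => abs_nonneg _) (fun j _ => hu.2.1 _)
    _ = M₁ ^ n := by simp

lemma prod_cont {u : ℝ → ℝ} (hu : Continuous u) (n : ℕ) :
    Continuous (fun τ : Fin n → ℝ => ∏ j : Fin n, u (-(τ j))) :=
  continuous_finset_prod _ fun j _ => hu.comp (continuous_apply j).neg

lemma integrand_integrable {M₁ M₂ : ℝ} {n : ℕ} {h : (Fin n → ℝ) → ℝ}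
    (hh : Integrable h) {u : ℝ → ℝ} (hu : MemK M₁ M₂ u) :
    Integrable (fun τ : Fin n → ℝ => h τ * ∏ j, u (-(τ j))) := by
  have := hh.bdd_mul (c := M₁ ^ n) (prod_cont hu.1 n).aestronglyMeasurable (Filter.Eventually.of_forall fun τ => prod_bdd hu τ)
  simpa [mul_comm] using this

lemma sum_extend {N N' : ℕ} (hNN' : N ≤ N') {h : (n : ℕ) → (Fin n → ℝ) → ℝ}
    (h0 : ∀ n, N < n → h n = 0) (u : ℝ → ℝ) :
    ∑ n ∈ Finset.Icc 1 N', (∫ τ : Fin n → ℝ, h n τ * ∏ j, u (-(τ j))) =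
    ∑ n ∈ Finset.Icc 1 N, (∫ τ : Fin n → ℝ, h n τ * ∏ j, u (-(τ j))) := by
  symm
  apply Finset.sum_subset (Finset.Icc_subset_Icc_right hNN')
  intro k hk hk'
  have hkN : N < k := by
    simp only [Finset.mem_Icc] at hk hk'
    omega
  rw [h0 k hkN]
  simp

lemma VRep_add {M₁ M₂ : ℝ} {f g : C({u : ℝ → ℝ // MemK M₁ M₂ u}, ℝ)}
    (hf : VRep M₁ M₂ f) (hg : VRep M₁ M₂ g) : VRep M₁ M₂ (f + g) := by
  obtain ⟨N₁, c₁, h₁, hi₁, hv₁, he₁⟩ := hf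
  obtain ⟨N₂, c₂, h₂, hi₂, hv₂, he₂⟩ := hg
  refine ⟨max N₁ N₂, c₁ + c₂, fun n => h₁ n + h₂ n, fun n => (hi₁ n).add (hi₂ n),
    fun n hn => ?_, fun x => ?_⟩
  · funext τ
    simp [hv₁ n (lt_of_le_of_lt (le_max_left _ _) hn), hv₂ n (lt_of_le_of_lt (le_max_right _ _) hn)]
  · have key : ∀ n ∈ Finset.Icc 1 (max N₁ N₂),
        (∫ τ : Fin n → ℝ, (h₁ n + h₂ n) τ * ∏ j, x.val (-(τ j))) =
        (∫ τ : Fin n → ℝ, h₁ n τ * ∏ j, x.val (-(τ j))) +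
        (∫ τ : Fin n → ℝ, h₂ n τ * ∏ j, x.val (-(τ j))) := by
      intro n _
      rw [← integral_add (integrand_integrable (hi₁ n) x.prop)
        (integrand_integrable (hi₂ n) x.prop)]
      congr 1
      funext τ
      simp [add_mul]
    simp only [ContinuousMap.add_apply, he₁ x, he₂ x]
    rw [Finset.sum_congr rfl key, Finset.sum_add_distrib,
      sum_extend (le_max_left N₁ N₂) hv₁ x.val, sum_extend (le_max_right N₁ N₂) hv₂ x.val]
    ring

lemma VRep_smul {M₁ M₂ : ℝ} {f : C({u : ℝ → ℝ // MemK M₁ M₂ u}, ℝ)} (r : ℝ)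
    (hf : VRep M₁ M₂ f) : VRep M₁ M₂ (r • f) := by
  obtain ⟨N, c, h, hi, hv, he⟩ := hf
  refine ⟨N, r * c, fun n τ => r * h n τ, fun n => (hi n).const_mul r, fun n hn => ?_,
    fun x => ?_⟩
  · funext τ; simp [hv n hn]
  · simp only [ContinuousMap.smul_apply, he x, smul_eq_mul]
    rw [mul_add, Finset.mul_sum]
    congr 1
    refine Finset.sum_congr rfl fun n _ => ?_
    rw [← integral_const_mul]
    congr 1
    funext τ
    ring

lemma VRep_zero {M₁ M₂ : ℝ} : VRep M₁ M₂ 0 :=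
  ⟨0, 0, fun n => (0 : (Fin n → ℝ) → ℝ), fun n => integrable_zero (Fin n → ℝ) ℝ volume,
    fun _ _ => rfl, fun x => by simp⟩

lemma gnat_integrable {n : ℕ} (p : Fin n → ℝ × ℝ) (m : ℕ) :
    Integrable (fun s : ℝ => if hm : m < n then
      (Set.Icc (p ⟨m, hm⟩).1 (p ⟨m, hm⟩).2).indicator (1 : ℝ → ℝ) s else (Set.Icc (0:ℝ) 1).indicator (1 : ℝ → ℝ) s) := by
  by_cases hm : m < n
  · simp only [dif_pos hm]
    exact (integrable_indicator_iff measurableSet_Icc).2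
      (integrableOn_const measure_Icc_lt_top.ne)
  · simp only [dif_neg hm]
    exact (integrable_indicator_iff measurableSet_Icc).2
      (integrableOn_const measure_Icc_lt_top.ne)

lemma VRep_monomial {M₁ M₂ : ℝ} {n : ℕ} (p : Fin n → ℝ × ℝ)
    (f : C({u : ℝ → ℝ // MemK M₁ M₂ u}, ℝ))
    (hf : ∀ x, f x = ∏ j : Fin n, Lfun (p j).1 (p j).2 x.val) : VRep M₁ M₂ f := by
  classical
  set gnat : ℕ → ℝ → ℝ := fun m s => if hm : m < n then
    (Set.Icc (p ⟨m, hm⟩).1 (p ⟨m, hm⟩).2).indicator (1 : ℝ → ℝ) s else (Set.Icc (0:ℝ) 1).indicator (1 : ℝ → ℝ) s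
    with hgnat
  refine ⟨n, if n = 0 then 1 else 0,
    fun k τ => (if k = n then (1:ℝ) else 0) * ∏ j : Fin k, gnat (j : ℕ) (τ j),
    fun k => ?_, fun k hk => ?_, fun x => ?_⟩
  · apply Integrable.const_mul
    exact Integrable.fin_nat_prod fun j => gnat_integrable p (j : ℕ)
  · have : k ≠ n := by omega
    funext τ
    simp [this]
  · -- evaluation
    have facteq : ∀ j : Fin n, (∫ s : ℝ, gnat (j : ℕ) s * x.val (-s)) = Lfun (p j).1 (p j).2 x.val := by
      intro j
      have hj : (j : ℕ) < n := j.isLt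
      have : (fun s : ℝ => gnat (j : ℕ) s * x.val (-s)) =
          fun s : ℝ => (Set.Icc (p j).1 (p j).2).indicator (fun s => x.val (-s)) s := by
        funext s
        rw [hgnat]
        simp only [hj, dif_pos, Fin.eta]
        by_cases hs : s ∈ Set.Icc (p j).1 (p j).2
        · simp [Set.indicator_of_mem hs]
        · simp [Set.indicator_of_notMem hs]
      rw [this, integral_indicator measurableSet_Icc]
      rfl
    have key : ∀ k, (∫ τ : Fin k → ℝ,
        ((if k = n then (1:ℝ) else 0) * ∏ j : Fin k, gnat (j : ℕ) (τ j)) * ∏ j, x.val (-(τ j))) =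
        (if k = n then (1:ℝ) else 0) * ∏ j : Fin k, (∫ s : ℝ, gnat (j : ℕ) s * x.val (-s)) := by
      intro k
      rw [← MeasureTheory.integral_fin_nat_prod_eq_prod
        (f := fun (j : Fin k) (s : ℝ) => gnat (j : ℕ) s * x.val (-s)), ← integral_const_mul]
      congr 1
      funext τ
      rw [Finset.prod_mul_distrib]
      ring
    rw [hf x]
    by_cases hn : n = 0
    · subst hn
      simp
    · have h1n : 1 ≤ n := Nat.one_le_iff_ne_zero.2 hn
      rw [if_neg hn]
      rw [Finset.sum_congr rfl (fun k _ => key k)]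
      rw [Finset.sum_eq_single_of_mem n (Finset.mem_Icc.2 ⟨h1n, le_refl n⟩)
        (fun k _ hkn => by simp [hkn])]
      rw [if_pos rfl, one_mul, zero_add]
      exact (Finset.prod_congr rfl fun j _ => (facteq j).symm)

/-- The window-integral functionals as continuous maps on K. -/
noncomputable def Gc {M₁ M₂ : ℝ} (hM₂ : 0 < M₂) (a b : ℝ) :
    C({u : ℝ → ℝ // MemK M₁ M₂ u}, ℝ) :=
  ⟨fun x => Lfun a b x.val, continuous_of_window hM₂ _ (Lfun_window a b)⟩

lemma Gc_apply {M₁ M₂ : ℝ} (hM₂ : 0 < M₂) (a b : ℝ) (x : {u : ℝ → ℝ // MemK M₁ M₂ u}) :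
    Gc hM₂ a b x = ∫ τ in Set.Icc a b, x.val (-τ) := rfl

lemma sep_aux {M₁ M₂ : ℝ} (hM₂ : 0 < M₂) (x y : {u : ℝ → ℝ // MemK M₁ M₂ u}) {t₀ : ℝ}
    (hd : y.val t₀ < x.val t₀) : ∃ a b : ℝ, Gc hM₂ a b y < Gc hM₂ a b x := by
  set u := x.val with hu
  set v := y.val with hv
  set d : ℝ := u t₀ - v t₀ with hdd
  have hdpos : 0 < d := sub_pos.2 hd
  have hcont : ContinuousAt (fun s => u s - v s) t₀ := (x.prop.1.sub y.prop.1).continuousAt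
  obtain ⟨δ, hδpos, hδ⟩ := Metric.continuousAt_iff.1 hcont (d / 2) (by positivity)
  set η : ℝ := δ / 2 with hη
  have hηpos : 0 < η := by positivity
  refine ⟨-t₀ - η, -t₀ + η, ?_⟩
  have hlow : ∀ τ ∈ Set.Icc (-t₀ - η) (-t₀ + η), d / 2 ≤ u (-τ) - v (-τ) := by
    intro τ hτ
    obtain ⟨h1, h2⟩ := hτ
    have hdist : dist (-τ) t₀ < δ := by
      rw [Real.dist_eq, abs_lt]
      constructor <;> linarith
    have := hδ hdist
    rw [Real.dist_eq] at this
    have := abs_lt.1 this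
    simp only [hdd] at this ⊢
    linarith [this.1]
  have hIu : IntegrableOn (fun τ => u (-τ)) (Set.Icc (-t₀ - η) (-t₀ + η)) :=
    (x.prop.1.comp continuous_neg).integrableOn_Icc
  have hIv : IntegrableOn (fun τ => v (-τ)) (Set.Icc (-t₀ - η) (-t₀ + η)) :=
    (y.prop.1.comp continuous_neg).integrableOn_Icc
  have hvol : (volume (Set.Icc (-t₀ - η) (-t₀ + η))).toReal = 2 * η := by
    rw [Real.volume_Icc, ENNReal.toReal_ofReal (by linarith)]
    ring
  have hmono : ∫ τ in Set.Icc (-t₀ - η) (-t₀ + η), (d / 2 : ℝ) ≤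
      ∫ τ in Set.Icc (-t₀ - η) (-t₀ + η), (u (-τ) - v (-τ)) := by
    apply setIntegral_mono_on
    · exact integrableOn_const measure_Icc_lt_top.ne
    · exact hIu.sub hIv
    · exact measurableSet_Icc
    · exact hlow
  rw [setIntegral_const, measureReal_def, hvol, smul_eq_mul] at hmono
  have hsub : Gc hM₂ (-t₀ - η) (-t₀ + η) x - Gc hM₂ (-t₀ - η) (-t₀ + η) y =
      ∫ τ in Set.Icc (-t₀ - η) (-t₀ + η), (u (-τ) - v (-τ)) :=
    (integral_sub hIu hIv).symm
  have : 0 < Gc hM₂ (-t₀ - η) (-t₀ + η) x - Gc hM₂ (-t₀ - η) (-t₀ + η) y := by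
    rw [hsub]
    have : (0:ℝ) < 2 * η * (d / 2) := by positivity
    linarith
  linarith

lemma Gc_separates {M₁ M₂ : ℝ} (hM₂ : 0 < M₂) :
    (Algebra.adjoin ℝ
      (Set.range (fun pq : ℝ × ℝ => Gc (M₁ := M₁) hM₂ pq.1 pq.2))).SeparatesPoints := by
  intro x y hxy
  have hne : x.val ≠ y.val := fun h => hxy (Subtype.ext h)
  obtain ⟨t₀, ht₀⟩ := Function.ne_iff.1 hne
  rcases lt_or_gt_of_ne ht₀ with h | h
  · obtain ⟨a, b, hab⟩ := sep_aux hM₂ y x h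
    exact ⟨Gc hM₂ a b, ⟨Gc hM₂ a b, Algebra.subset_adjoin ⟨(a, b), rfl⟩, rfl⟩, ne_of_lt hab⟩
  · obtain ⟨a, b, hab⟩ := sep_aux hM₂ x y h
    exact ⟨Gc hM₂ a b, ⟨Gc hM₂ a b, Algebra.subset_adjoin ⟨(a, b), rfl⟩, rfl⟩, ne_of_gt hab⟩

lemma VRep_of_mem_adjoin {M₁ M₂ : ℝ} (hM₂ : 0 < M₂)
    (f : C({u : ℝ → ℝ // MemK M₁ M₂ u}, ℝ))
    (hf : f ∈ Algebra.adjoin ℝ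
      (Set.range (fun pq : ℝ × ℝ => Gc (M₁ := M₁) hM₂ pq.1 pq.2))) :
    VRep M₁ M₂ f := by
  have hf' : f ∈ Submodule.span ℝ
      ((Submonoid.closure (Set.range (fun pq : ℝ × ℝ => Gc (M₁ := M₁) hM₂ pq.1 pq.2)) :
        Submonoid C({u : ℝ → ℝ // MemK M₁ M₂ u}, ℝ)) : Set _) := by
    have := Algebra.adjoin_eq_span (R := ℝ)
      (s := Set.range (fun pq : ℝ × ℝ => Gc (M₁ := M₁) hM₂ pq.1 pq.2))
    rw [← this]
    exact hf
  refine Submodule.span_induction (fun m hm => ?_) VRep_zero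
    (fun a b _ _ ha hb => VRep_add ha hb) (fun r a _ ha => VRep_smul r ha) hf'
  obtain ⟨l, hl, rfl⟩ := Submonoid.exists_list_of_mem_closure hm
  have hsel : ∀ j : Fin l.length, ∃ pq : ℝ × ℝ, Gc (M₁ := M₁) hM₂ pq.1 pq.2 = l.get j :=
    fun j => hl (l.get j) (l.get_mem j)
  choose pq hpq using hsel
  apply VRep_monomial pq
  intro x
  let ev : C({u : ℝ → ℝ // MemK M₁ M₂ u}, ℝ) →* ℝ :=
    { toFun := fun f => f x, map_one' := rfl, map_mul' := fun f g => rfl }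
  have h1 : l.prod x = (l.map ev).prod := by
    exact congrArg id (map_list_prod ev l)
  have h2 : (l.map ev).prod = ∏ j : Fin l.length, ev (l.get j) := by
    conv_lhs => rw [← List.ofFn_get l]
    rw [List.map_ofFn, List.prod_ofFn]
    rfl
  rw [h1, h2]
  refine Finset.prod_congr rfl fun j _ => ?_
  rw [← hpq j]
  rfl

lemma MemK.shift {M₁ M₂ : ℝ} {u : ℝ → ℝ} (hu : MemK M₁ M₂ u) (t : ℝ) :
    MemK M₁ M₂ (fun s => u (s + t)) := by
  refine ⟨hu.1.comp (continuous_add_right t), fun s => hu.2.1 (s + t), fun τ hτ s => ?_⟩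
  have e : s - τ + t = (s + t) - τ := by ring
  simp only [e]
  exact hu.2.2 τ hτ (s + t)


end BoydChuaProof

/-- Volterra approximation theorem (Boyd–Chua): any time-invariant operator R with fading
memory on K_{M₁,M₂} can be approximated to within any ε > 0, uniformly in time and over all
u ∈ K_{M₁,M₂}, by a finite Volterra series operator. -/
theorem boyd_chua_volterra_approx (M₁ M₂ ε : ℝ) (hM₁ : 0 < M₁) (hM₂ : 0 < M₂) (hε : 0 < ε)
    (R : (ℝ → ℝ) → ℝ → ℝ)
    (hTI : ∀ u : ℝ → ℝ, MemK M₁ M₂ u → ∀ τ t : ℝ, R (fun s => u (s - τ)) t = R u (t - τ))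
    (hFM : FadingMemoryOn R {u | MemK M₁ M₂ u}) :
    ∃ V : VolterraSeries, ∀ u : ℝ → ℝ, MemK M₁ M₂ u →
      ∀ t, |R u t - V.apply u t| < ε := by
  classical
  haveI : CompactSpace {u : ℝ → ℝ // MemK M₁ M₂ u} := by
    exact isCompact_iff_compactSpace.mp (isCompact_K hM₂.le)
  set F : C({u : ℝ → ℝ // MemK M₁ M₂ u}, ℝ) :=
    ⟨fun x => R x.val 0, continuous_of_window hM₂ _ (window_of_fadingMemory hM₁ R hFM)⟩ with hF
  obtain ⟨g, hg⟩ := ContinuousMap.exists_mem_subalgebra_near_continuousMap_of_separatesPoints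
    (Algebra.adjoin ℝ (Set.range (fun pq : ℝ × ℝ => Gc (M₁ := M₁) hM₂ pq.1 pq.2)))
    (Gc_separates hM₂) F (ε / 2) (by positivity)
  obtain ⟨N, c, h, hi, hv, he⟩ := VRep_of_mem_adjoin hM₂ g.val g.prop
  refine ⟨⟨N, c, h, fun n _ _ => hi n⟩, fun u hu t => ?_⟩
  set u' : ℝ → ℝ := fun s => u (s + t) with hu'def
  have hu' : MemK M₁ M₂ u' := hu.shift t
  set x' : {u : ℝ → ℝ // MemK M₁ M₂ u} := ⟨u', hu'⟩ with hx'
  -- time invariance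
  have hR : R u t = R u' 0 := by
    have := hTI u hu (-t) 0
    have e : (fun s => u (s - (-t))) = u' := by
      funext s
      simp [hu'def, sub_neg_eq_add]
    rw [e] at this
    rw [this]
    norm_num
  -- Volterra time invariance
  have hV : VolterraSeries.apply ⟨N, c, h, fun n _ _ => hi n⟩ u t =
      VolterraSeries.apply ⟨N, c, h, fun n _ _ => hi n⟩ u' 0 := by
    unfold VolterraSeries.apply
    congr 1
    refine Finset.sum_congr rfl fun n _ => ?_
    congr 1
    funext τ
    congr 1
    refine Finset.prod_congr rfl fun j _ => ?_
    show u (t - τ j) = u (0 - τ j + t)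
    ring_nf
  -- the approximation at x'
  have happ : VolterraSeries.apply ⟨N, c, h, fun n _ _ => hi n⟩ u' 0 = g.val x' := by
    rw [he x']
    unfold VolterraSeries.apply
    congr 1
    refine Finset.sum_congr rfl fun n _ => ?_
    congr 1
    funext τ
    congr 1
    refine Finset.prod_congr rfl fun j _ => ?_
    show u' (0 - τ j) = u' (-(τ j))
    rw [zero_sub]
  have hFx : R u t = F x' := by rw [hR]; rfl
  rw [hFx, hV, happ]
  have hnorm : |F x' - g.val x'| ≤ ‖g.val - F‖ := by
    have := (g.val - F).norm_coe_le_norm x'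
    rw [ContinuousMap.sub_apply, Real.norm_eq_abs, abs_sub_comm] at this
    exact this
  calc |F x' - g.val x'| ≤ ‖g.val - F‖ := hnorm
    _ < ε / 2 := hg
    _ < ε := by linarith
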